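/- Let n ≥ d ≥ 3 and suppose the points c₁, …, c_n all belong to an affine hyperplane H of ℝ^d. Suppose there is an affine subspace L ⊆ H of dimension d−2 such that the set {π(c₁), …, π(c_n)} has at most d−1 elements, where π : H → L is the orthogonal projection. Then there are no sets X₁, …, X_n covering ℝ^d such that each X_i is a spray with center c_i. -/

import Mathlib

open Set InnerProductSpace RealInnerProductSpace

lemma orth_sq {E : Type*} [NormedAddCommGroup E] [InnerProductSpace ℝ E] {a b : E}
    (h : ⟪a, b⟫_ℝ = 0) : ‖a + b‖^2 = ‖a‖^2 + ‖b‖^2 := by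
  rw [norm_add_sq_real, h]; ring


lemma combo : ∀ (k : ℕ), 2 ≤ k → ∀ (T : Fin k → Set ℝ), (∀ j, ¬ (T j).Countable) →
    ∀ {n : ℕ} (A : Fin n → Set (Fin k → ℝ)) (dir : Fin n → Fin k),
    (∀ i c, {ξ | ξ ∈ A i ∧ ξ (dir i) = c}.Finite) →
    ∃ ξ ∈ Set.univ.pi T, ∀ i, ξ ∉ A i := by
  intro k hk
  induction k, hk using Nat.le_induction with
  | base =>
    intro T hT n A dir hA
    have hT0inf : (T 0).Infinite := fun hfin => hT 0 hfin.countable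
    obtain ⟨f, hfinj⟩ := hT0inf.natEmbedding
    set pt : ℝ → ℝ → (Fin 2 → ℝ) := fun a cc => ![a, cc] with hpt
    have hpt0 : ∀ a cc, pt a cc 0 = a := by intro a cc; simp [hpt]
    have hpt1 : ∀ a cc, pt a cc 1 = cc := by intro a cc; simp [hpt]
    set F : ℕ → Set ℝ := fun m => ⋃ i ∈ {i : Fin n | dir i = 0}, {cc : ℝ | pt (f m) cc ∈ A i} with hF
    have hFfin : ∀ m, (F m).Finite := by
      intro m
      apply Set.Finite.biUnion (Set.toFinite _)
      intro i hi
      have : {cc : ℝ | pt (f m) cc ∈ A i} ⊆ (fun cc => pt (f m) cc) ⁻¹' {ξ | ξ ∈ A i ∧ ξ (dir i) = (f m : ℝ)} := by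
        intro cc hcc
        refine ⟨hcc, ?_⟩
        simp only [show dir i = 0 from hi]; exact hpt0 _ _
      refine Set.Finite.subset (Set.Finite.preimage ?_ (hA i (f m))) this
      intro a _ b _ hab
      have := congrArg (fun g => g 1) hab
      simpa [hpt1] using this
    have hcstar : ¬ (T 1 ⊆ ⋃ m, F m) := by
      intro hsub
      exact hT 1 ((Set.countable_iUnion (fun m => (hFfin m).countable)).mono hsub)
    obtain ⟨cstar, hcT, hcnot⟩ := Set.not_subset.mp hcstar
    set G : Set ℝ := ⋃ i ∈ {i : Fin n | dir i = 1}, {a : ℝ | pt a cstar ∈ A i} with hG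
    have hGfin : G.Finite := by
      apply Set.Finite.biUnion (Set.toFinite _)
      intro i hi
      have : {a : ℝ | pt a cstar ∈ A i} ⊆ (fun a => pt a cstar) ⁻¹' {ξ | ξ ∈ A i ∧ ξ (dir i) = cstar} := by
        intro a ha
        refine ⟨ha, ?_⟩
        simp only [show dir i = 1 from hi]; exact hpt1 _ _
      refine Set.Finite.subset (Set.Finite.preimage ?_ (hA i cstar)) this
      intro a _ b _ hab
      have := congrArg (fun g => g 0) hab
      simpa [hpt0] using this
    have : ∃ m : ℕ, (f m : ℝ) ∉ G := by
      by_contra hcon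
      push_neg at hcon
      have hr : Set.range (fun m => (f m : ℝ)) ⊆ G := by rintro _ ⟨m, rfl⟩; exact hcon m
      have hinj : Function.Injective (fun m => (f m : ℝ)) := fun a b hab => hfinj (Subtype.ext hab)
      exact (Set.infinite_range_of_injective hinj) (hGfin.subset hr)
    obtain ⟨m, hmG⟩ := this
    refine ⟨pt (f m) cstar, ?_, ?_⟩
    · intro j _
      have : (j : ℕ) = 0 ∨ (j : ℕ) = 1 := by omega
      rcases this with h | h
      · have : j = 0 := Fin.ext h
        rw [this, hpt0]; exact (f m).2
      · have : j = 1 := Fin.ext h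
        rw [this, hpt1]; exact hcT
    · intro i hmem
      have : (dir i : ℕ) = 0 ∨ (dir i : ℕ) = 1 := by omega
      rcases this with h | h
      · have h0 : dir i = 0 := Fin.ext h
        apply hcnot
        refine Set.mem_iUnion.mpr ⟨m, ?_⟩
        exact Set.mem_biUnion (show i ∈ {i : Fin n | dir i = 0} from h0) hmem
      · have h1 : dir i = 1 := Fin.ext h
        exact hmG (Set.mem_biUnion (show i ∈ {i : Fin n | dir i = 1} from h1) hmem)
  | succ k hk ih =>
    intro T hT n A dir hA
    have hlastinf : (T (Fin.last k)).Infinite := fun h => hT _ h.countable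
    obtain ⟨cstar, hcstar⟩ := hlastinf.nonempty
    set Fc : Set (Fin (k+1) → ℝ) := ⋃ i ∈ {i : Fin n | dir i = Fin.last k}, {ξ | ξ ∈ A i ∧ ξ (Fin.last k) = cstar} with hFc
    have hFcfin : Fc.Finite := by
      apply Set.Finite.biUnion (Set.toFinite _)
      intro i hi
      have h := hA i cstar
      rw [show dir i = Fin.last k from hi] at h
      exact h
    set T' : Fin k → Set ℝ := fun j => T j.castSucc \ ((fun ξ : Fin (k+1) → ℝ => ξ j.castSucc) '' Fc) with hT'
    have hT'unc : ∀ j, ¬ (T' j).Countable := by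
      intro j hcnt
      apply hT j.castSucc
      have hsub : T j.castSucc ⊆ T' j ∪ ((fun ξ : Fin (k+1) → ℝ => ξ j.castSucc) '' Fc) := by
        intro a ha
        by_cases h : a ∈ ((fun ξ : Fin (k+1) → ℝ => ξ j.castSucc) '' Fc)
        · exact Or.inr h
        · exact Or.inl ⟨ha, h⟩
      exact ((hcnt.union ((hFcfin.image _).countable)).mono hsub)
    set A' : Fin n → Set (Fin k → ℝ) := fun i => if dir i = Fin.last k then ∅ else {ξ' | Fin.snoc ξ' cstar ∈ A i} with hA'
    set dir' : Fin n → Fin k := fun i => if h : dir i = Fin.last k then ⟨0, by omega⟩ else (dir i).castPred h with hdir'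
    have hA'fin : ∀ i c, {ξ' | ξ' ∈ A' i ∧ ξ' (dir' i) = c}.Finite := by
      intro i c
      by_cases h : dir i = Fin.last k
      · have : {ξ' | ξ' ∈ A' i ∧ ξ' (dir' i) = c} ⊆ (∅ : Set (Fin k → ℝ)) := by
          intro ξ' hξ'
          have h1 := hξ'.1
          rw [hA'] at h1
          simpa [if_pos h] using h1
        exact Set.Finite.subset (Set.finite_empty) this
      · have hsub : {ξ' | ξ' ∈ A' i ∧ ξ' (dir' i) = c} ⊆ (fun ξ' : Fin k → ℝ => Fin.snoc ξ' cstar) ⁻¹' {ξ | ξ ∈ A i ∧ ξ (dir i) = c} := by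
          intro ξ' hξ'
          obtain ⟨h1, h2⟩ := hξ'
          rw [hA'] at h1
          simp only [if_neg h] at h1
          refine ⟨h1, ?_⟩
          show (Fin.snoc ξ' cstar : Fin (k+1) → ℝ) (dir i) = c
          have hcs : dir i = ((dir i).castPred h).castSucc := (Fin.castSucc_castPred _ _).symm
          rw [hcs, Fin.snoc_castSucc]
          rw [hdir'] at h2
          simpa [dif_neg h] using h2
        refine Set.Finite.subset (Set.Finite.preimage ?_ (hA i c)) hsub
        intro a _ b _ hab
        have := congrArg Fin.init hab
        simpa [Fin.init_snoc] using this
    obtain ⟨ξ', hξ'T, hξ'A⟩ := ih T' hT'unc A' dir' hA'fin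
    have hξ'Tm : ∀ j, ξ' j ∈ T' j := fun j => hξ'T j (Set.mem_univ _)
    refine ⟨Fin.snoc ξ' cstar, ?_, ?_⟩
    · intro j _
      refine Fin.lastCases ?_ ?_ j
      · show (Fin.snoc ξ' cstar : Fin (k+1) → ℝ) (Fin.last k) ∈ T (Fin.last k)
        rw [Fin.snoc_last]; exact hcstar
      · intro j'
        show (Fin.snoc ξ' cstar : Fin (k+1) → ℝ) j'.castSucc ∈ T j'.castSucc
        rw [Fin.snoc_castSucc]
        exact (hξ'Tm j').1
    · intro i hmem
      by_cases h : dir i = Fin.last k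
      · have hin : Fin.snoc ξ' cstar ∈ Fc :=
          Set.mem_biUnion (show i ∈ {i : Fin n | dir i = Fin.last k} from h) ⟨hmem, by show (Fin.snoc ξ' cstar : Fin (k+1) → ℝ) (Fin.last k) = cstar; rw [Fin.snoc_last]⟩
        have himg : ξ' ⟨0, by omega⟩ ∈ (fun ξ : Fin (k+1) → ℝ => ξ (Fin.castSucc ⟨0, by omega⟩)) '' Fc :=
          ⟨_, hin, by show (Fin.snoc ξ' cstar : Fin (k+1) → ℝ) (Fin.castSucc ⟨0, by omega⟩) = _; rw [Fin.snoc_castSucc]⟩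
        exact (hξ'Tm ⟨0, by omega⟩).2 himg
      · apply hξ'A i
        rw [hA']
        simp only [if_neg h]
        exact hmem

/-- A spray with center `c`: every sphere centered at `c` meets `X` in a finite set. -/
def IsSpray {d : ℕ} (c : EuclideanSpace ℝ (Fin d)) (X : Set (EuclideanSpace ℝ (Fin d))) : Prop :=
  ∀ r : ℝ, {x ∈ X | ‖x - c‖ = r}.Finite

set_option maxHeartbeats 2000000 in
theorem stmt7 (d n : ℕ) (hd : 3 ≤ d) (hn : d ≤ n)
    (c : Fin n → EuclideanSpace ℝ (Fin d))
    (H L : AffineSubspace ℝ (EuclideanSpace ℝ (Fin d)))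
    (hH : Module.finrank ℝ H.direction = d - 1)
    (hcH : ∀ i, c i ∈ H)
    (hLH : L ≤ H)
    (hL : Module.finrank ℝ L.direction = d - 2)
    -- `q i` is the orthogonal projection of `c i` onto `L`
    (q : Fin n → EuclideanSpace ℝ (Fin d))
    (hq : ∀ i, q i ∈ L ∧ c i - q i ∈ L.directionᗮ)
    (hcard : (Set.range q).ncard ≤ d - 1)
    (X : Fin n → Set (EuclideanSpace ℝ (Fin d)))
    (hX : ∀ i, IsSpray (c i) (X i)) :
    (⋃ i, X i) ≠ Set.univ := by
  intro hcover
  -- a unit normal vector to H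
  have hHne : H.direction ≠ ⊤ := by
    intro htop
    have : Module.finrank ℝ H.direction = d := by
      rw [htop, finrank_top, finrank_euclideanSpace_fin]
    omega
  have hHorth : H.directionᗮ ≠ ⊥ := by
    intro hbot
    exact hHne (Submodule.orthogonal_eq_bot_iff.mp hbot)
  obtain ⟨v₀, hv₀mem, hv₀ne⟩ := (Submodule.ne_bot_iff _).mp hHorth
  set v := (‖v₀‖ : ℝ)⁻¹ • v₀ with hvdef
  have hv1 : ‖v‖ = 1 := norm_smul_inv_norm hv₀ne
  have hvmem : v ∈ H.directionᗮ := Submodule.smul_mem _ _ hv₀mem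
  have hLdir : L.direction ≤ H.direction := AffineSubspace.direction_le hLH
  have hqL : ∀ i, q i ∈ L := fun i => (hq i).1
  have hwperpL : ∀ i, c i - q i ∈ L.directionᗮ := fun i => (hq i).2
  have hwH : ∀ i, c i - q i ∈ H.direction := by
    intro i
    have := AffineSubspace.vsub_mem_direction (hcH i) (hLH (hqL i))
    simpa [vsub_eq_sub] using this
  by_cases hW : L.direction ⊓ (vectorSpan ℝ (Set.range q))ᗮ = ⊥
  · -- grid case: L.direction ⊓ (vectorSpan)ᗮ = ⊥
    -- Step 1: vectorSpan of the q's is all of L.direction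
    have hUL : vectorSpan ℝ (Set.range q) ≤ L.direction := by
      rw [vectorSpan_def, Submodule.span_le]
      rintro x hx
      rw [Set.mem_vsub] at hx
      obtain ⟨a, ha, b, hb, rfl⟩ := hx
      obtain ⟨i, rfl⟩ := ha
      obtain ⟨j, rfl⟩ := hb
      exact AffineSubspace.vsub_mem_direction (hqL i) (hqL j)
    have hUeq : vectorSpan ℝ (Set.range q) = L.direction := by
      refine le_antisymm hUL ?_
      intro x hx
      have hp := Submodule.sub_starProjection_mem_orthogonal
        (K := vectorSpan ℝ (Set.range q)) x
      set p : EuclideanSpace ℝ (Fin d) :=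
        ↑(Submodule.orthogonalProjectionOnto (vectorSpan ℝ (Set.range q)) x) with hpdef
      have hpU : p ∈ vectorSpan ℝ (Set.range q) :=
        (Submodule.orthogonalProjectionOnto (vectorSpan ℝ (Set.range q)) x).2
      have hxp : x - p ∈ L.direction ⊓ (vectorSpan ℝ (Set.range q))ᗮ :=
        ⟨Submodule.sub_mem _ hx (hUL hpU), hp⟩
      rw [hW] at hxp
      have hxpz : x - p = 0 := hxp
      have hxeq : x = p := by rwa [sub_eq_zero] at hxpz
      rw [hxeq]
      exact hpU
    have hUfr : Module.finrank ℝ (vectorSpan ℝ (Set.range q)) = d - 2 := by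
      rw [hUeq]; exact hL
    -- Step 2: enumerate the distinct q-values
    have hfinQ : (Set.range q).Finite := Set.finite_range q
    set F : Finset (EuclideanSpace ℝ (Fin d)) := hfinQ.toFinset with hFdef
    have hFcard : (Set.range q).ncard = F.card := Set.ncard_eq_toFinset_card _ hfinQ
    set k := F.card with hkdef
    set Q : Fin k → EuclideanSpace ℝ (Fin d) := fun j => ↑(F.equivFin.symm j) with hQdef
    have hQmemF : ∀ j, Q j ∈ F := fun j => (F.equivFin.symm j).2
    have hQrangeq : ∀ j, Q j ∈ Set.range q := fun j => (hfinQ.mem_toFinset).mp (hQmemF j)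
    have hQL : ∀ j, Q j ∈ L := by
      intro j
      obtain ⟨i, hi⟩ := hQrangeq j
      rw [← hi]; exact hqL i
    have hrangeQ : Set.range Q = Set.range q := by
      ext y
      constructor
      · rintro ⟨j, rfl⟩; exact hQrangeq j
      · rintro ⟨i, rfl⟩
        refine ⟨F.equivFin ⟨q i, hfinQ.mem_toFinset.mpr ⟨i, rfl⟩⟩, ?_⟩
        rw [hQdef]
        simp
    have hn0 : 0 < n := by omega
    have hk1 : 1 ≤ k := by
      rw [hkdef]
      have : q ⟨0, hn0⟩ ∈ F := hfinQ.mem_toFinset.mpr ⟨_, rfl⟩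
      exact Finset.card_pos.mpr ⟨_, this⟩
    have hksub : Module.finrank ℝ (vectorSpan ℝ (Set.range Q)) ≤ k - 1 :=
      finrank_vectorSpan_range_le ℝ Q (n := k - 1) (by rw [Fintype.card_fin]; omega)
    have hkd : k = d - 1 := by
      rw [hrangeQ, hUfr] at hksub
      rw [hFcard] at hcard
      omega
    have hk2 : 2 ≤ k := by omega
    set jl : Fin k := ⟨k - 1, by omega⟩ with hjldef
    have hspan : Submodule.span ℝ
        (Set.range (fun i : {x : Fin k // x ≠ jl} => Q ↑i -ᵥ Q jl)) = L.direction := by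
      rw [← vectorSpan_range_eq_span_range_vsub_right_ne ℝ Q jl, hrangeQ, hUeq]
    -- Step 3: the solving linear map
    set Φ : ↥(L.direction) →ₗ[ℝ] ({x : Fin k // x ≠ jl} → ℝ) :=
      LinearMap.pi (fun j => ((innerₛₗ ℝ (Q ↑j - Q jl)).comp (L.direction).subtype)) with hΦdef
    have hΦap : ∀ (y : ↥(L.direction)) (j : {x : Fin k // x ≠ jl}),
        Φ y j = ⟪Q ↑j - Q jl, (y : EuclideanSpace ℝ (Fin d))⟫_ℝ := fun y j => rfl
    have hΦinj : Function.Injective Φ := by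
      rw [← LinearMap.ker_eq_bot]
      rw [Submodule.eq_bot_iff]
      intro y hy
      rw [LinearMap.mem_ker] at hy
      have hyperp : (y : EuclideanSpace ℝ (Fin d)) ∈
          (Submodule.span ℝ (Set.range (fun i : {x : Fin k // x ≠ jl} => Q ↑i -ᵥ Q jl)))ᗮ := by
        rw [Submodule.mem_orthogonal]
        intro u hu
        refine Submodule.span_induction ?_ ?_ ?_ ?_ hu
        · rintro u ⟨j, rfl⟩
          have h0 := congrFun hy j
          rw [hΦap] at h0
          simpa [vsub_eq_sub] using h0
        · exact inner_zero_left _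
        · intro a b _ _ ha hb
          rw [inner_add_left, ha, hb, add_zero]
        · intro r a _ ha
          rw [real_inner_smul_left, ha, mul_zero]
      rw [hspan] at hyperp
      have hz : ⟪(y : EuclideanSpace ℝ (Fin d)), (y : EuclideanSpace ℝ (Fin d))⟫_ℝ = 0 :=
        Submodule.inner_right_of_mem_orthogonal y.2 hyperp
      exact Subtype.ext (inner_self_eq_zero.mp hz)
    have hcardsub : Fintype.card {x : Fin k // x ≠ jl} = k - 1 := by
      have h1 := Fintype.card_subtype_compl (fun x : Fin k => x = jl)
      rw [Fintype.card_subtype_eq, Fintype.card_fin] at h1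
      exact h1
    have hdimeq : Module.finrank ℝ ↥(L.direction) =
        Module.finrank ℝ ({x : Fin k // x ≠ jl} → ℝ) := by
      rw [Module.finrank_pi, hcardsub, hL]
      omega
    set ΦE := Φ.linearEquivOfInjective hΦinj hdimeq with hΦEdef
    set Asym : ({x : Fin k // x ≠ jl} → ℝ) →L[ℝ] ↥(L.direction) :=
      LinearMap.toContinuousLinearMap (ΦE.symm.toLinearMap) with hAsymdef
    have hAsymap : ∀ z, Asym z = ΦE.symm z := fun z => rfl
    -- Step 4: constants and the grid map
    set Cb : ℝ := ∑ j : {x : Fin k // x ≠ jl}, (‖Q ↑j - Q jl‖^2 + 1) with hCbdef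
    have hCb0 : 0 ≤ Cb := Finset.sum_nonneg (fun j _ => by positivity)
    set K0 : ℝ := ‖Asym‖ * Cb with hK0def
    have hK00 : 0 ≤ K0 := mul_nonneg (ContinuousLinearMap.opNorm_nonneg _) hCb0
    set M : ℝ := K0^2 + 1 with hMdef
    set T : Fin k → Set ℝ := fun _ => Ioo M (M+1) with hTdef
    set ρ : (Fin k → ℝ) → ({x : Fin k // x ≠ jl} → ℝ) :=
      fun ξ j => (‖Q ↑j - Q jl‖^2 - ξ ↑j + ξ jl)/2 with hρdef
    set yy : (Fin k → ℝ) → ↥(L.direction) := fun ξ => Asym (ρ ξ) with hyydef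
    have hyinner : ∀ ξ (j : {x : Fin k // x ≠ jl}),
        ⟪Q ↑j - Q jl, ((yy ξ : ↥(L.direction)) : EuclideanSpace ℝ (Fin d))⟫_ℝ = ρ ξ j := by
      intro ξ j
      have hΦyy : Φ (yy ξ) = ρ ξ := by
        rw [hyydef]
        show Φ (Asym (ρ ξ)) = ρ ξ
        rw [hAsymap]
        have := LinearMap.linearEquivOfInjective_apply (f := Φ) hΦinj hdimeq (ΦE.symm (ρ ξ))
        rw [← hΦEdef] at this
        rw [← this, LinearEquiv.apply_symm_apply]
      have := congrFun hΦyy j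
      rw [hΦap] at this
      exact this
    -- bound on the norm of yy
    have hybound : ∀ ξ, ξ ∈ Set.univ.pi T → ‖((yy ξ : ↥(L.direction)) : EuclideanSpace ℝ (Fin d))‖^2 < ξ jl := by
      intro ξ hξ
      have hρb : ‖ρ ξ‖ ≤ Cb := by
        rw [pi_norm_le_iff_of_nonneg hCb0]
        intro j
        rw [Real.norm_eq_abs]
        have hjl := hξ jl (Set.mem_univ _)
        have hjj := hξ (↑j) (Set.mem_univ _)
        rw [hTdef] at hjl hjj
        simp only [Set.mem_Ioo] at hjl hjj
        have habs : |ξ jl - ξ ↑j| ≤ 1 := by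
          rw [abs_le]; constructor <;> linarith [hjl.1, hjl.2, hjj.1, hjj.2]
        have h1 : |ρ ξ j| ≤ ‖Q ↑j - Q jl‖^2 + 1 := by
          simp only [hρdef]
          have : (‖Q ↑j - Q jl‖^2 - ξ ↑j + ξ jl)/2 = (‖Q ↑j - Q jl‖^2 + (ξ jl - ξ ↑j))/2 := by ring
          rw [this]
          rw [abs_div]
          have h2 : |‖Q ↑j - Q jl‖^2 + (ξ jl - ξ ↑j)| ≤ ‖Q ↑j - Q jl‖^2 + 1 := by
            calc |‖Q ↑j - Q jl‖^2 + (ξ jl - ξ ↑j)| ≤ |‖Q ↑j - Q jl‖^2| + |ξ jl - ξ ↑j| := abs_add_le _ _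
            _ ≤ ‖Q ↑j - Q jl‖^2 + 1 := by
                rw [abs_of_nonneg (by positivity)]
                linarith
          rw [abs_of_pos (by norm_num : (0:ℝ) < 2)]
          linarith [h2, abs_nonneg (‖Q ↑j - Q jl‖^2 + (ξ jl - ξ ↑j))]
        refine le_trans h1 ?_
        rw [hCbdef]
        exact Finset.single_le_sum (f := fun j : {x : Fin k // x ≠ jl} => ‖Q ↑j - Q jl‖^2 + 1)
          (fun i _ => by positivity) (Finset.mem_univ j)
      have hy1 : ‖yy ξ‖ ≤ K0 := by
        rw [hyydef]
        calc ‖Asym (ρ ξ)‖ ≤ ‖Asym‖ * ‖ρ ξ‖ := Asym.le_opNorm _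
        _ ≤ ‖Asym‖ * Cb := by
            exact mul_le_mul_of_nonneg_left hρb (ContinuousLinearMap.opNorm_nonneg _)
      have hycoe : ‖((yy ξ : ↥(L.direction)) : EuclideanSpace ℝ (Fin d))‖ = ‖yy ξ‖ := rfl
      have hjl := hξ jl (Set.mem_univ _)
      rw [hTdef] at hjl
      simp only [Set.mem_Ioo] at hjl
      have hsq : ‖yy ξ‖^2 ≤ K0^2 := by
        have := pow_le_pow_left₀ (norm_nonneg (yy ξ)) hy1 2
        exact this
      rw [hycoe]
      calc ‖yy ξ‖^2 ≤ K0^2 := hsq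
      _ < ξ jl := by rw [hMdef] at hjl; linarith [hjl.1]
    set τ : (Fin k → ℝ) → ℝ :=
      fun ξ => Real.sqrt (ξ jl - ‖((yy ξ : ↥(L.direction)) : EuclideanSpace ℝ (Fin d))‖^2) with hτdef
    set xg : (Fin k → ℝ) → EuclideanSpace ℝ (Fin d) :=
      fun ξ => Q jl + ↑(yy ξ) + τ ξ • v with hxgdef
    have hτsq : ∀ ξ, ξ ∈ Set.univ.pi T →
        (τ ξ)^2 = ξ jl - ‖((yy ξ : ↥(L.direction)) : EuclideanSpace ℝ (Fin d))‖^2 := by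
      intro ξ hξ
      rw [hτdef]
      exact Real.sq_sqrt (by linarith [hybound ξ hξ])
    -- Step 5: key distance identities
    have key1 : ∀ ξ, ξ ∈ Set.univ.pi T → ∀ j : Fin k, ‖xg ξ - Q j‖^2 = ξ j := by
      intro ξ hξ j
      have haL : (Q jl - Q j) + ((yy ξ : ↥(L.direction)) : EuclideanSpace ℝ (Fin d)) ∈ L.direction := by
        refine Submodule.add_mem _ ?_ (yy ξ).2
        have := AffineSubspace.vsub_mem_direction (hQL jl) (hQL j)
        simpa [vsub_eq_sub] using this
      have hsplit : xg ξ - Q j = ((Q jl - Q j) + ↑(yy ξ)) + τ ξ • v := by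
        rw [hxgdef]; beta_reduce; abel
      have hperp : ⟪(Q jl - Q j) + ((yy ξ : ↥(L.direction)) : EuclideanSpace ℝ (Fin d)), τ ξ • v⟫_ℝ = 0 := by
        rw [real_inner_smul_right,
          Submodule.inner_right_of_mem_orthogonal (hLdir haL) hvmem, mul_zero]
      rw [hsplit, orth_sq hperp, norm_smul, hv1, Real.norm_eq_abs, mul_one, sq_abs, hτsq ξ hξ]
      by_cases hj : j = jl
      · rw [hj, sub_self, zero_add]
        ring
      · have hin := hyinner ξ ⟨j, hj⟩
        rw [hρdef] at hin
        have hrw : (Q jl - Q j) + ((yy ξ : ↥(L.direction)) : EuclideanSpace ℝ (Fin d))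
            = ((yy ξ : ↥(L.direction)) : EuclideanSpace ℝ (Fin d)) - (Q j - Q jl) := by abel
        rw [hrw, norm_sub_sq_real, real_inner_comm]
        simp only at hin
        rw [hin]
        ring
    set dir : Fin n → Fin k :=
      fun i => F.equivFin ⟨q i, hfinQ.mem_toFinset.mpr ⟨i, rfl⟩⟩ with hdirdef
    have hQdi : ∀ i, Q (dir i) = q i := by
      intro i
      rw [hQdef, hdirdef]
      simp
    have key2 : ∀ ξ, ξ ∈ Set.univ.pi T → ∀ i,
        ‖xg ξ - c i‖^2 = ξ (dir i) + ‖c i - q i‖^2 := by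
      intro ξ hξ i
      have hsplit : xg ξ - c i = (xg ξ - Q (dir i)) + (-(c i - q i)) := by
        rw [hQdi i]; abel
      have hsplit2 : xg ξ - Q (dir i) = ((Q jl - Q (dir i)) + ↑(yy ξ)) + τ ξ • v := by
        rw [hxgdef]; beta_reduce; abel
      have haL : (Q jl - Q (dir i)) + ((yy ξ : ↥(L.direction)) : EuclideanSpace ℝ (Fin d)) ∈ L.direction := by
        refine Submodule.add_mem _ ?_ (yy ξ).2
        have := AffineSubspace.vsub_mem_direction (hQL jl) (hQL (dir i))
        simpa [vsub_eq_sub] using this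
      have hperp : ⟪xg ξ - Q (dir i), -(c i - q i)⟫_ℝ = 0 := by
        rw [hsplit2, inner_add_left, inner_neg_right, inner_neg_right,
          Submodule.inner_right_of_mem_orthogonal haL (hwperpL i), real_inner_smul_left]
        have hv5 : ⟪v, c i - q i⟫_ℝ = 0 := by
          rw [real_inner_comm]
          exact Submodule.inner_right_of_mem_orthogonal (hwH i) hvmem
        rw [hv5]
        ring
      rw [hsplit, orth_sq hperp, norm_neg, key1 ξ hξ (dir i)]
    -- Step 6: injectivity on the grid
    have hinj : Set.InjOn xg (Set.univ.pi T) := by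
      intro ξ1 h1 ξ2 h2 heq
      funext j
      have e1 := key1 ξ1 h1 j
      have e2 := key1 ξ2 h2 j
      rw [← e1, ← e2, heq]
    -- Step 7: the covering sets and finiteness of slices
    set A : Fin n → Set (Fin k → ℝ) :=
      fun i => {ξ | ξ ∈ Set.univ.pi T ∧ xg ξ ∈ X i} with hAdef
    have hA : ∀ i cc, {ξ | ξ ∈ A i ∧ ξ (dir i) = cc}.Finite := by
      intro i cc
      have hsubset : {ξ | ξ ∈ A i ∧ ξ (dir i) = cc} ⊆ Set.univ.pi T := fun ξ h => h.1.1
      have himg : xg '' {ξ | ξ ∈ A i ∧ ξ (dir i) = cc} ⊆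
          {z | z ∈ X i ∧ ‖z - c i‖ = Real.sqrt (cc + ‖c i - q i‖^2)} := by
        rintro z ⟨ξ, ⟨⟨hξT, hξX⟩, hξc⟩, rfl⟩
        refine ⟨hξX, ?_⟩
        have hk2' := key2 ξ hξT i
        rw [hξc] at hk2'
        rw [← Real.sqrt_sq (norm_nonneg (xg ξ - c i)), hk2']
      have hfinimg : (xg '' {ξ | ξ ∈ A i ∧ ξ (dir i) = cc}).Finite :=
        (hX i _).subset himg
      exact Set.Finite.of_finite_image hfinimg (hinj.mono hsubset)
    -- Step 8: the T_j are uncountable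
    have hTunc : ∀ j : Fin k, ¬ (T j).Countable := by
      intro j hcnt
      have hlt : M < M + 1 := by linarith
      have hmk := Cardinal.mk_Ioo_real hlt
      have hle : (Cardinal.mk ↑(Ioo M (M+1))) ≤ Cardinal.aleph0 :=
        Cardinal.mk_le_aleph0_iff.mpr (Set.countable_coe_iff.mpr hcnt)
      rw [hmk] at hle
      exact absurd hle (not_le.mpr Cardinal.aleph0_lt_continuum)
    -- Step 9: apply the combinatorial lemma
    obtain ⟨ξ, hξT, hξA⟩ := combo k hk2 T hTunc A dir hA
    have hcov : xg ξ ∈ ⋃ i, X i := by rw [hcover]; trivial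
    obtain ⟨i, hi⟩ := mem_iUnion.mp hcov
    exact hξA i ⟨hξT, hi⟩
  · -- circle case
    obtain ⟨w₀, hw₀mem, hw₀ne⟩ := (Submodule.ne_bot_iff _).mp hW
    set w := (‖w₀‖ : ℝ)⁻¹ • w₀ with hwdef
    have hw1 : ‖w‖ = 1 := norm_smul_inv_norm hw₀ne
    have hwmem : w ∈ L.direction ⊓ (vectorSpan ℝ (Set.range q))ᗮ := Submodule.smul_mem _ _ hw₀mem
    have hwL : w ∈ L.direction := hwmem.1
    have hwQ : w ∈ (vectorSpan ℝ (Set.range q))ᗮ := hwmem.2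
    have hn0 : 0 < n := by omega
    set i₀ : Fin n := ⟨0, hn0⟩
    set o := q i₀
    clear_value v w
    have h6 : ⟪w, v⟫_ℝ = 0 :=
      Submodule.inner_right_of_mem_orthogonal (hLdir hwL) hvmem
    have hww : ⟪w, w⟫_ℝ = 1 := by rw [real_inner_self_eq_norm_sq, hw1]; norm_num
    set xx : ℝ → EuclideanSpace ℝ (Fin d) := fun t => o + Real.cos t • w + Real.sin t • v with hxx
    -- distance computation
    have hdist : ∀ t (i : Fin n), ‖xx t - c i‖^2 = ‖o - q i‖^2 + ‖c i - q i‖^2 + 1 := by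
      intro t i
      have hoqL : o - q i ∈ L.direction := by
        have := AffineSubspace.vsub_mem_direction (hqL i₀) (hqL i)
        simpa [vsub_eq_sub] using this
      have hoqQ : o - q i ∈ vectorSpan ℝ (Set.range q) := by
        have hm0 : q i₀ ∈ Set.range q := ⟨i₀, rfl⟩
        have hmi : q i ∈ Set.range q := ⟨i, rfl⟩
        have := vsub_mem_vectorSpan ℝ hm0 hmi
        simpa [vsub_eq_sub] using this
      have h1 : ⟪o - q i, c i - q i⟫_ℝ = 0 :=
        Submodule.inner_right_of_mem_orthogonal hoqL (hwperpL i)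
      have h1' : ⟪o - q i, -(c i - q i)⟫_ℝ = 0 := by rw [inner_neg_right, h1, neg_zero]
      have h2 : ⟪o - q i, w⟫_ℝ = 0 :=
        Submodule.inner_right_of_mem_orthogonal hoqQ hwQ
      have h3 : ⟪o - q i, v⟫_ℝ = 0 :=
        Submodule.inner_right_of_mem_orthogonal (hLdir hoqL) hvmem
      have h4 : ⟪c i - q i, w⟫_ℝ = 0 := by
        rw [real_inner_comm]
        exact Submodule.inner_right_of_mem_orthogonal hwL (hwperpL i)
      have h5 : ⟪c i - q i, v⟫_ℝ = 0 :=
        Submodule.inner_right_of_mem_orthogonal (hwH i) hvmem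
      have hsplit : xx t - c i = ((o - q i) + (-(c i - q i))) + Real.cos t • w + Real.sin t • v := by
        rw [hxx]
        beta_reduce; abel
      rw [hsplit]
      have ha : ⟪(o - q i) + (-(c i - q i)), Real.cos t • w⟫_ℝ = 0 := by
        simp only [inner_add_left, inner_neg_left, real_inner_smul_right, h2, h4,
          mul_zero, neg_zero, add_zero, zero_add, neg_neg]
      have hb : ⟪(o - q i) + (-(c i - q i)) + Real.cos t • w, Real.sin t • v⟫_ℝ = 0 := by
        simp only [inner_add_left, inner_neg_left, real_inner_smul_right, real_inner_smul_left,
          h3, h5, h6, mul_zero, neg_zero, add_zero, zero_add, neg_neg]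
      rw [orth_sq hb, orth_sq ha, orth_sq h1']
      rw [norm_neg, norm_smul, norm_smul, hv1, hw1]
      simp only [Real.norm_eq_abs, mul_one]
      rw [sq_abs, sq_abs]
      nlinarith [Real.sin_sq_add_cos_sq t]
    set r : Fin n → ℝ := fun i => Real.sqrt (‖o - q i‖^2 + ‖c i - q i‖^2 + 1) with hr
    have hrr : ∀ t (i : Fin n), ‖xx t - c i‖ = r i := by
      intro t i
      rw [← Real.sqrt_sq (norm_nonneg (xx t - c i)), hdist t i]
    have hSsub : xx '' (Ioo 0 Real.pi) ⊆ ⋃ i, {z | z ∈ X i ∧ ‖z - c i‖ = r i} := by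
      rintro z ⟨t, ht, rfl⟩
      have hz : xx t ∈ ⋃ i, X i := by rw [hcover]; trivial
      obtain ⟨i, hi⟩ := mem_iUnion.mp hz
      exact mem_iUnion.mpr ⟨i, hi, hrr t i⟩
    have hfin : (xx '' (Ioo 0 Real.pi)).Finite :=
      Set.Finite.subset (Set.finite_iUnion (fun i => hX i (r i))) hSsub
    have hinj : Set.InjOn xx (Ioo 0 Real.pi) := by
      have e1 : ∀ t, ⟪w, xx t - o⟫_ℝ = Real.cos t := by
        intro t
        have hsp : xx t - o = Real.cos t • w + Real.sin t • v := by rw [hxx]; beta_reduce; abel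
        rw [hsp]
        simp only [inner_add_right, real_inner_smul_right, hww, h6, mul_one, mul_zero, add_zero]
      intro t1 h1 t2 h2 heq
      refine Real.injOn_cos ⟨le_of_lt h1.1, le_of_lt h1.2⟩ ⟨le_of_lt h2.1, le_of_lt h2.2⟩ ?_
      rw [← e1 t1, ← e1 t2, heq]
    exact ((Set.infinite_image_iff hinj).mpr (Set.Ioo_infinite Real.pi_pos)) hfin
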